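/- Let H be a complex Hilbert space and let D be a bounded self-adjoint operator on H such that 0 is not an accumulation point of the spectrum of D, i.e. there exists δ > 0 with spectrum(D) ∩ (−δ, δ) ⊆ {0}. For t > 0 let u_t = (tD + i)(tD − i)^{-1} (the operator tD − i is invertible since tD is self-adjoint). Then u_t converges in operator norm, as t → ∞, to 1 − 2P, where P is the orthogonal projection of H onto the kernel of D. -/

import Mathlib

open Filter

lemma gap_coercive
    {H : Type*} [NormedAddCommGroup H] [InnerProductSpace ℂ H] [CompleteSpace H]
    (D : H →L[ℂ] H) (hD : IsSelfAdjoint D) {δ : ℝ} (hδ : 0 < δ)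
    (hspec : ∀ z ∈ spectrum ℂ D, ‖z‖ < δ → z = 0) :
    ∃ C : ℝ, 0 < C ∧ ∀ y ∈ (LinearMap.ker (D : H →ₗ[ℂ] H))ᗮ, ‖y‖ ≤ C * ‖D y‖ := by
  set g : ℝ → ℝ := fun x => x / max (x ^ 2) (δ ^ 2) with hgdef
  have hgc : Continuous g := by
    apply continuous_id.div ((continuous_pow 2).max continuous_const)
    intro x
    have : (0:ℝ) < max (x ^ 2) (δ ^ 2) := lt_max_of_lt_right (by positivity)
    exact ne_of_gt this
  set R := cfc g D with hRdef
  have hDRD : D * R * D = D := by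
    have h1 : cfc (fun x : ℝ => x * g x) D = D * R := by
      rw [cfc_mul (fun x : ℝ => x) g D continuousOn_id hgc.continuousOn, cfc_id' ℝ D hD]
    have h2 : cfc (fun x : ℝ => x * g x * x) D = D * R * D := by
      rw [cfc_mul (fun x : ℝ => x * g x) (fun x : ℝ => x) D
        ((continuous_id.mul hgc).continuousOn) continuousOn_id, h1, cfc_id' ℝ D hD]
    rw [← h2]
    have hcongr : (spectrum ℝ D).EqOn (fun x : ℝ => (x * g x) * x) id := by
      intro x hx
      simp only [id_eq]
      by_cases hxδ : |x| < δ
      · have hxC : (x : ℂ) ∈ spectrum ℂ D := spectrum.algebraMap_mem ℂ hx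
        have hx0 : (x : ℂ) = 0 := hspec _ hxC (by simpa using hxδ)
        have : x = 0 := by exact_mod_cast hx0
        simp [this, hgdef]
      · have hδx : δ ≤ |x| := not_lt.1 hxδ
        have hx0 : x ≠ 0 := by
          intro h; rw [h] at hδx; simp at hδx; linarith
        have hmax : max (x ^ 2) (δ ^ 2) = x ^ 2 := by
          apply max_eq_left
          calc δ ^ 2 ≤ |x| ^ 2 := pow_le_pow_left₀ hδ.le hδx 2
            _ = x ^ 2 := sq_abs x
        simp only [hgdef, hmax]
        field_simp
    rw [cfc_congr hcongr, cfc_id ℝ D hD]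
  refine ⟨‖R‖ + 1, by positivity, fun y hy => ?_⟩
  have hker : y - R (D y) ∈ LinearMap.ker (D : H →ₗ[ℂ] H) := by
    have := DFunLike.congr_fun hDRD y
    simp only [ContinuousLinearMap.mul_apply] at this
    simp only [LinearMap.mem_ker]
    simp [map_sub, this]
  have hinner : (inner ℂ (y - R (D y)) y : ℂ) = 0 :=
    (Submodule.mem_orthogonal _ y).1 hy _ hker
  have key : ‖y‖ ^ 2 ≤ ‖R‖ * ‖D y‖ * ‖y‖ := by
    have h1 : (inner ℂ y y : ℂ) = inner ℂ (R (D y)) y := by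
      have := inner_sub_left (𝕜 := ℂ) y (R (D y)) y
      rw [hinner] at this
      linear_combination -this
    have h2 : ‖y‖ ^ 2 = Complex.re (inner ℂ (R (D y)) y) := by
      rw [← h1, ← inner_self_eq_norm_sq (𝕜 := ℂ) y]
      rfl
    rw [h2]
    calc Complex.re (inner ℂ (R (D y)) y) ≤ ‖(inner ℂ (R (D y)) y : ℂ)‖ := Complex.re_le_norm _
      _ = ‖(inner ℂ (R (D y)) y : ℂ)‖ := rfl
      _ ≤ ‖R (D y)‖ * ‖y‖ := norm_inner_le_norm _ _
      _ ≤ (‖R‖ * ‖D y‖) * ‖y‖ :=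
          mul_le_mul_of_nonneg_right (R.le_opNorm _) (norm_nonneg y)
  rcases eq_or_lt_of_le (norm_nonneg y) with h0 | h0
  · rw [← h0]; positivity
  · nlinarith [key, norm_nonneg (D y), h0]

set_option maxHeartbeats 1000000 in
/-- Let `D` be a bounded self-adjoint operator on a complex Hilbert space whose spectrum
does not accumulate at `0`. Then `tD − i` is invertible for all `t`, and
`u_t = (tD + i)(tD − i)⁻¹` converges in operator norm, as `t → ∞`, to `1 − 2P`, where
`P` is the orthogonal projection onto the kernel of `D`. -/
theorem cayley_homotopy_limit
    {H : Type*} [NormedAddCommGroup H] [InnerProductSpace ℂ H] [CompleteSpace H]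
    (D : H →L[ℂ] H) (hD : IsSelfAdjoint D)
    (hgap : ∃ δ : ℝ, 0 < δ ∧ ∀ z ∈ spectrum ℂ D, ‖z‖ < δ → z = 0) :
    (∀ t : ℝ, IsUnit ((t : ℂ) • D - Complex.I • (1 : H →L[ℂ] H))) ∧
    Tendsto
      (fun t : ℝ => ((t : ℂ) • D + Complex.I • (1 : H →L[ℂ] H)) *
        Ring.inverse ((t : ℂ) • D - Complex.I • (1 : H →L[ℂ] H)))
      atTop
      (nhds ((1 : H →L[ℂ] H) -
        2 • ((LinearMap.ker (D : H →ₗ[ℂ] H)).subtypeL.comp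
          (Submodule.orthogonalProjection (LinearMap.ker (D : H →ₗ[ℂ] H)))))) := by
  obtain ⟨δ, hδ, hspec⟩ := hgap
  obtain ⟨C, hC, hcoer⟩ := gap_coercive D hD hδ hspec
  set K : Submodule ℂ H := LinearMap.ker (D : H →ₗ[ℂ] H) with hK
  set P : H →L[ℂ] H := K.subtypeL.comp (Submodule.orthogonalProjection K) with hPdef
  have hUnit : ∀ t : ℝ, IsUnit ((t : ℂ) • D - Complex.I • (1 : H →L[ℂ] H)) := by
    intro t
    have hsa : IsSelfAdjoint ((t : ℂ) • D) :=
      IsSelfAdjoint.smul (show star ((t : ℝ) : ℂ) = ((t : ℝ) : ℂ) by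
        rw [Complex.star_def, Complex.conj_ofReal]) hD
    have hns : Complex.I ∉ spectrum ℂ ((t : ℂ) • D) := by
      intro hmem
      have h := hsa.mem_spectrum_eq_re hmem
      rw [Complex.I_re] at h
      exact Complex.I_ne_zero (by simpa using h)
    rw [spectrum.notMem_iff, Algebra.algebraMap_eq_smul_one] at hns
    simpa [neg_sub] using hns.neg
  have hDP : D * P = 0 := by
    ext x
    show D (P x) = 0
    have hm : (↑(Submodule.orthogonalProjection K x) : H) ∈ LinearMap.ker (D : H →ₗ[ℂ] H) :=
      (Submodule.orthogonalProjection K x).2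
    simpa [hPdef] using hm
  have hPsa : IsSelfAdjoint P := isSelfAdjoint_starProjection K
  have hPD : P * D = 0 := by
    have h := congrArg star hDP
    rwa [star_mul, hPsa.star_eq, hD.star_eq, star_zero] at h
  have hPP : P * P = P := by
    ext x
    simp [hPdef, ContinuousLinearMap.mul_apply, Submodule.orthogonalProjectionOnto_mem_subspace_eq_self]
    exact Submodule.starProjection_eq_self_iff.mpr (Submodule.orthogonalProjection K x).2
  have hbound : ∀ t : ℝ, 0 < t →
      ‖((t : ℂ) • D + Complex.I • (1 : H →L[ℂ] H)) *
        Ring.inverse ((t : ℂ) • D - Complex.I • (1 : H →L[ℂ] H)) -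
        ((1 : H →L[ℂ] H) - 2 • P)‖ ≤ 2 * C / t := by
    intro t ht
    set A : H →L[ℂ] H := (t : ℂ) • D - Complex.I • (1 : H →L[ℂ] H) with hA
    set B : H →L[ℂ] H := (t : ℂ) • D + Complex.I • (1 : H →L[ℂ] H) with hB
    have hu := hUnit t
    set Ai : H →L[ℂ] H := Ring.inverse A with hAi
    have hAAi : A * Ai = 1 := Ring.mul_inverse_cancel A hu
    have hAiA : Ai * A = 1 := Ring.inverse_mul_cancel A hu
    have hAP : A * (Complex.I • P) = P := by
      rw [hA, mul_smul_comm, sub_mul, smul_mul_assoc, hDP, smul_zero, smul_mul_assoc, one_mul,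
        zero_sub, smul_neg, smul_smul, Complex.I_mul_I]
      simp
    have hAiP : Ai * P = Complex.I • P := by
      calc Ai * P = Ai * (A * (Complex.I • P)) := by rw [hAP]
        _ = (Ai * A) * (Complex.I • P) := by rw [mul_assoc]
        _ = Complex.I • P := by rw [hAiA, one_mul]
    have hkey : B * Ai - ((1 : H →L[ℂ] H) - 2 • P) = (2 * Complex.I) • (Ai * (1 - P)) := by
      have hB' : B = A + (2 * Complex.I) • 1 := by
        rw [hA, hB]; module
      rw [hB', add_mul, smul_mul_assoc, one_mul, hAAi, mul_sub, hAiP, mul_one, smul_sub,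
        smul_smul]
      have hI2 : 2 * Complex.I * Complex.I = -2 := by
        rw [mul_assoc, Complex.I_mul_I]; ring
      rw [hI2]
      have h2P : (2 : ℕ) • P = (2 : ℂ) • P := by
        rw [← Nat.cast_smul_eq_nsmul ℂ 2 P]; norm_num
      rw [h2P]
      module
    rw [hkey, norm_smul]
    have h2I : ‖(2 * Complex.I : ℂ)‖ = 2 := by simp
    rw [h2I]
    have hmain : ‖Ai * ((1 : H →L[ℂ] H) - P)‖ ≤ C / t := by
      apply ContinuousLinearMap.opNorm_le_bound _ (by positivity)
      intro x
      set w : H := ((1 : H →L[ℂ] H) - P) x with hw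
      set y : H := Ai w with hy
      have hAy : A y = w := by
        have h := DFunLike.congr_fun hAAi w
        simpa [ContinuousLinearMap.mul_apply] using h
      have hPw : P w = 0 := by
        have h := DFunLike.congr_fun hPP x
        simp only [ContinuousLinearMap.mul_apply] at h
        simp [hw, map_sub, h]
      have hPDy : P (D y) = 0 := by
        have h := DFunLike.congr_fun hPD y
        simpa [ContinuousLinearMap.mul_apply] using h
      have hPy : P y = 0 := by
        have h1 : P (A y) = 0 := by rw [hAy, hPw]
        rw [hA] at h1
        simp only [ContinuousLinearMap.sub_apply, ContinuousLinearMap.smul_apply,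
          ContinuousLinearMap.one_apply, map_sub, map_smul, hPDy, smul_zero, zero_sub,
          neg_eq_zero] at h1
        simpa [smul_eq_zero, Complex.I_ne_zero] using h1
      have hyK : y ∈ Kᗮ := by
        have h : y - (↑(Submodule.orthogonalProjection K y) : H) ∈ Kᗮ :=
          Submodule.sub_starProjection_mem_orthogonal (K := K) y
        have h0 : (↑(Submodule.orthogonalProjection K y) : H) = 0 := by
          simpa [hPdef] using hPy
        rwa [h0, sub_zero] at h
      have hDy : ‖y‖ ≤ C * ‖D y‖ := hcoer y hyK
      have him : (inner ℂ (D y) y : ℂ).im = 0 := by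
        rw [← Complex.conj_eq_iff_im]
        have hsym := (ContinuousLinearMap.isSelfAdjoint_iff_isSymmetric.1 hD) y y
        calc (starRingEnd ℂ) (inner ℂ (D y) y : ℂ) = inner ℂ y (D y) := inner_conj_symm y (D y)
          _ = inner ℂ (D y) y := hsym.symm
      have hre : (inner ℂ ((t : ℂ) • (D y)) (Complex.I • y) : ℂ).re = 0 := by
        rw [inner_smul_left, inner_smul_right]
        simp [Complex.mul_re, Complex.mul_im, Complex.conj_ofReal, him]
      have hwn : ‖w‖ ^ 2 = (t * ‖D y‖) ^ 2 + ‖y‖ ^ 2 := by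
        rw [← hAy, hA]
        simp only [ContinuousLinearMap.sub_apply, ContinuousLinearMap.smul_apply,
          ContinuousLinearMap.one_apply]
        rw [norm_sub_sq (𝕜 := ℂ)]
        have e1 : ‖(t : ℂ) • D y‖ = t * ‖D y‖ := by
          rw [norm_smul]; simp [abs_of_pos ht]
        have e2 : ‖Complex.I • y‖ = ‖y‖ := by
          rw [norm_smul]; simp
        rw [e1, e2]
        have : RCLike.re (inner ℂ ((t : ℂ) • D y) (Complex.I • y) : ℂ) = 0 := hre
        rw [this]
        ring
      have htDy : t * ‖D y‖ ≤ ‖w‖ := by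
        apply le_of_pow_le_pow_left₀ two_ne_zero (norm_nonneg w)
        nlinarith [sq_nonneg ‖y‖]
      have hwK : w ∈ Kᗮ := by
        have h : w - (↑(Submodule.orthogonalProjection K w) : H) ∈ Kᗮ :=
          Submodule.sub_starProjection_mem_orthogonal (K := K) w
        have h0 : (↑(Submodule.orthogonalProjection K w) : H) = 0 := by
          simpa [hPdef] using hPw
        rwa [h0, sub_zero] at h
      have hwx : ‖w‖ ≤ ‖x‖ := by
        have hx_eq : P x + w = x := by
          simp [hw]
        have hPxK : P x ∈ K := by
          simp only [hPdef, ContinuousLinearMap.comp_apply, Submodule.subtypeL_apply]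
          exact (Submodule.orthogonalProjection K x).2
        have hper : (inner ℂ (P x) w : ℂ) = 0 :=
          (Submodule.mem_orthogonal _ w).1 hwK _ hPxK
        have hsq := norm_add_sq (𝕜 := ℂ) (P x) w
        rw [hx_eq, hper] at hsq
        simp only [map_zero, mul_zero, add_zero] at hsq
        have hle : ‖w‖ ^ 2 ≤ ‖x‖ ^ 2 := by nlinarith [sq_nonneg ‖P x‖]
        exact le_of_pow_le_pow_left₀ two_ne_zero (norm_nonneg x) hle
      have hyx : ‖y‖ ≤ C / t * ‖x‖ := by
        calc ‖y‖ ≤ C * ‖D y‖ := hDy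
          _ ≤ C * (‖w‖ / t) := by
              apply mul_le_mul_of_nonneg_left _ hC.le
              rw [le_div_iff₀ ht, mul_comm]
              exact htDy
          _ = C / t * ‖w‖ := by ring
          _ ≤ C / t * ‖x‖ := by
              apply mul_le_mul_of_nonneg_left hwx (by positivity)
      calc ‖(Ai * ((1 : H →L[ℂ] H) - P)) x‖ = ‖y‖ := rfl
        _ ≤ C / t * ‖x‖ := hyx
    calc 2 * ‖Ai * ((1 : H →L[ℂ] H) - P)‖ ≤ 2 * (C / t) := by linarith
      _ = 2 * C / t := by ring
  refine ⟨hUnit, ?_⟩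
  rw [← tendsto_sub_nhds_zero_iff]
  apply squeeze_zero_norm' (a := fun t : ℝ => 2 * C / t)
  · filter_upwards [eventually_gt_atTop (0 : ℝ)] with t ht
    exact hbound t ht
  · exact tendsto_const_nhds.div_atTop tendsto_id
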